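/- arXiv:1612.04561 — 4 statements merged into one kernel-verified Lean document; each statement's English description precedes it below -/
import Mathlib

section
/- For any finite-dimensional k-algebra A there is an isomorphism of A-bimodules between the end ∫_{m ∈ A-Mod} m ⊗_k m* and the regular bimodule A, and an isomorphism of A-bimodules between the coend ∫^{m ∈ A-Mod} m ⊗_k m* and the co-regular bimodule A*. -/
open CategoryTheory CategoryTheory.Limits Opposite

universe w v u v₁ u₁ v₂ u₂ v₃ u₃ v₄ u₄

namespace EW

variable (k : Type u) [Field k]

/-- `k`-linear structure on finitely generated modules over a `k`-algebra. -/
noncomputable instance fgLinear (A : Type u) [Ring A] [Algebra k A] :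
    CategoryTheory.Linear k (FGModuleCat.{u} A) :=
  (inferInstance :
    CategoryTheory.Linear k (ObjectProperty.FullSubcategory fun V : ModuleCat.{u} A => Module.Finite A V))

/-- A finite `k`-linear category: a `k`-linear category which is linearly equivalent to the
category of finite-dimensional (equivalently, finitely generated) modules over some
finite-dimensional `k`-algebra. -/
class IsFiniteLinear (C : Type u₁) [Category.{v₁} C] [Preadditive C]
    [CategoryTheory.Linear k C] : Prop where
  out : ∃ (A : Type u) (_ : Ring A) (_ : Algebra k A) (_ : FiniteDimensional k A)
      (e : C ⥤ FGModuleCat.{u} A) (_ : e.Additive), e.Linear k ∧ e.IsEquivalence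


/-- The opposite of a `k`-linear category is `k`-linear. -/
noncomputable instance opLinear {C : Type u₁} [Category.{v₁} C] [Preadditive C]
    [CategoryTheory.Linear k C] : CategoryTheory.Linear k Cᵒᵖ where
  homModule X Y := (opEquiv X Y).module k
  smul_comp := by
    intro X Y Z r f g
    apply Quiver.Hom.unop_inj
    exact CategoryTheory.Linear.comp_smul _ _ _ _ _ _
  comp_smul := by
    intro X Y Z f r g
    apply Quiver.Hom.unop_inj
    exact CategoryTheory.Linear.smul_comp _ _ _ _ _ _

section Nakayama


variable {X : Type u₁} [Category.{v₁} X] [Preadditive X] [CategoryTheory.Linear k X]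

/-- Data exhibiting a functor `N` as the left exact Nakayama functor
`Π̄_X = ∫_{x ∈ X} Hom_X(x, -) ⊗ x` of `X`: for every `y`, the object `N.obj y` is the end
`∫_{x} Hom_X(x,y) ⊗ x`.  Morphisms `d ⟶ Hom_X(x,y) ⊗ x` into the copower are identified
with linear maps `Hom_X(x,y)* →ₗ[k] (d ⟶ x)`, so the universal wedge is recorded as the
family `π`, which is dinatural (`wedge`), natural in `y` (`natural`) and universal. -/
structure LexNakayamaData : Type _ where
  N : X ⥤ X
  π : ∀ y x : X, Module.Dual k (x ⟶ y) →ₗ[k] (N.obj y ⟶ x)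
  wedge : ∀ {y x x' : X} (f : x ⟶ x') (ψ : Module.Dual k (x ⟶ y)),
    π y x ψ ≫ f = π y x' (ψ.comp (CategoryTheory.Linear.leftComp k y f))
  natural : ∀ {y y' : X} (g : y ⟶ y') (x : X) (ψ : Module.Dual k (x ⟶ y')),
    N.map g ≫ π y' x ψ = π y x (ψ.comp (CategoryTheory.Linear.rightComp k x g))
  universal : ∀ (y d : X) (θ : ∀ x : X, Module.Dual k (x ⟶ y) →ₗ[k] (d ⟶ x)),
    (∀ {x x' : X} (f : x ⟶ x') (ψ : Module.Dual k (x ⟶ y)),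
      θ x ψ ≫ f = θ x' (ψ.comp (CategoryTheory.Linear.leftComp k y f))) →
    ∃! κ : d ⟶ N.obj y, ∀ (x : X) (ψ : Module.Dual k (x ⟶ y)), θ x ψ = κ ≫ π y x ψ

/-- Data exhibiting a functor `N` as the (right exact) Nakayama functor
`Π_X = ∫^{x ∈ X} Hom_X(-, x)* ⊗ x` of `X`: for every `y`, the object `N.obj y` is the coend
`∫^{x} Hom_X(y,x)* ⊗ x`.  Morphisms `Hom_X(y,x)* ⊗ x ⟶ d` out of the components are
identified with linear maps `Hom_X(y,x)* →ₗ[k] (x ⟶ d)`, so the universal wedge is recorded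
as the family `ι`, which is dinatural (`wedge`), natural in `y` (`natural`) and universal. -/
structure RexNakayamaData : Type _ where
  N : X ⥤ X
  ι : ∀ y x : X, Module.Dual k (y ⟶ x) →ₗ[k] (x ⟶ N.obj y)
  wedge : ∀ {y x x' : X} (f : x ⟶ x') (ψ : Module.Dual k (y ⟶ x')),
    f ≫ ι y x' ψ = ι y x (ψ.comp (CategoryTheory.Linear.rightComp k y f))
  natural : ∀ {y y' : X} (g : y ⟶ y') (x : X) (ψ : Module.Dual k (y ⟶ x)),
    ι y x ψ ≫ N.map g = ι y' x (ψ.comp (CategoryTheory.Linear.leftComp k x g))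
  universal : ∀ (y d : X) (θ : ∀ x : X, Module.Dual k (y ⟶ x) →ₗ[k] (x ⟶ d)),
    (∀ {x x' : X} (f : x ⟶ x') (ψ : Module.Dual k (y ⟶ x')),
      f ≫ θ x' ψ = θ x (ψ.comp (CategoryTheory.Linear.rightComp k y f))) →
    ∃! κ : N.obj y ⟶ d, ∀ (x : X) (ψ : Module.Dual k (y ⟶ x)), θ x ψ = ι y x ψ ≫ κ

end Nakayama

section Deligne

/-- The universal property characterizing `box : P ⥤ Q ⥤ D` as exhibiting `D` as the
Deligne product `P ⊠ Q`: `box` is exact in each variable, and `D` is universal among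
`k`-linear categories for functors out of `P × Q` which are right exact in each variable. -/
class IsDeligneProduct {P : Type u₁} [Category.{v₁} P] [Preadditive P]
    [CategoryTheory.Linear k P]
    {Q : Type u₂} [Category.{v₂} Q] [Preadditive Q] [CategoryTheory.Linear k Q]
    {D : Type u₃} [Category.{v₃} D] [Preadditive D] [CategoryTheory.Linear k D]
    (box : P ⥤ Q ⥤ D) : Prop where
  exact_left : ∀ p : P,
    PreservesFiniteLimits (box.obj p) ∧ PreservesFiniteColimits (box.obj p)
  exact_right : ∀ q : Q,
    PreservesFiniteLimits (box.flip.obj q) ∧ PreservesFiniteColimits (box.flip.obj q)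
  lift : ∀ {X : Type u₄} [Category.{v₄} X] [Preadditive X] [CategoryTheory.Linear k X]
      (F : P ⥤ Q ⥤ X),
      (∀ p, PreservesFiniteColimits (F.obj p)) →
      (∀ q, PreservesFiniteColimits (F.flip.obj q)) →
      ∃ G : D ⥤ X, PreservesFiniteColimits G ∧
        Nonempty (box ⋙ (Functor.whiskeringRight Q D X).obj G ≅ F)
  lift_unique : ∀ {X : Type u₄} [Category.{v₄} X] [Preadditive X]
      [CategoryTheory.Linear k X] (G G' : D ⥤ X),
      PreservesFiniteColimits G → PreservesFiniteColimits G' →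
      Nonempty (box ⋙ (Functor.whiskeringRight Q D X).obj G ≅ box ⋙ (Functor.whiskeringRight Q D X).obj G') →
      Nonempty (G ≅ G')

variable {A : Type u₁} [Category.{v₁} A] {C : Type u₂} [Category.{v₂} C]
  {D : Type u₃} [Category.{v₃} D]

/-- Data exhibiting an object `pt` of (a model `D` of) the Deligne product `Aᵒᵖ ⊠ C` as the
coend `∫^{j ∈ J} (Lf j)‾ ⊠ (Rf j)`, via a universal dinatural family. -/
structure BoxCoend (box : Aᵒᵖ ⥤ C ⥤ D) {J : Type u₄} [Category.{v₄} J]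
    (Lf : J ⥤ A) (Rf : J ⥤ C) where
  pt : D
  ι : ∀ j : J, (box.obj (op (Lf.obj j))).obj (Rf.obj j) ⟶ pt
  dinat : ∀ {j j' : J} (f : j ⟶ j'),
    (box.map (Lf.map f).op).app (Rf.obj j) ≫ ι j
      = (box.obj (op (Lf.obj j'))).map (Rf.map f) ≫ ι j'
  universal : ∀ (z : D) (θ : ∀ j : J, (box.obj (op (Lf.obj j))).obj (Rf.obj j) ⟶ z),
    (∀ {j j' : J} (f : j ⟶ j'),
      (box.map (Lf.map f).op).app (Rf.obj j) ≫ θ j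
        = (box.obj (op (Lf.obj j'))).map (Rf.map f) ≫ θ j') →
    ∃! κ : pt ⟶ z, ∀ j, ι j ≫ κ = θ j

/-- Data exhibiting an object `pt` of (a model `D` of) the Deligne product `Aᵒᵖ ⊠ C` as the
end `∫_{j ∈ J} (Lf j)‾ ⊠ (Rf j)`, via a universal dinatural family. -/
structure BoxEnd (box : Aᵒᵖ ⥤ C ⥤ D) {J : Type u₄} [Category.{v₄} J]
    (Lf : J ⥤ A) (Rf : J ⥤ C) where
  pt : D
  π : ∀ j : J, pt ⟶ (box.obj (op (Lf.obj j))).obj (Rf.obj j)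
  dinat : ∀ {j j' : J} (f : j ⟶ j'),
    π j ≫ (box.obj (op (Lf.obj j))).map (Rf.map f)
      = π j' ≫ (box.map (Lf.map f).op).app (Rf.obj j')
  universal : ∀ (z : D) (θ : ∀ j : J, z ⟶ (box.obj (op (Lf.obj j))).obj (Rf.obj j)),
    (∀ {j j' : J} (f : j ⟶ j'),
      θ j ≫ (box.obj (op (Lf.obj j))).map (Rf.map f)
        = θ j' ≫ (box.map (Lf.map f).op).app (Rf.obj j')) →
    ∃! κ : z ⟶ pt, ∀ j, κ ≫ π j = θ j

end Deligne

end EW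

set_option linter.unusedSectionVars false

namespace EW

section ModulePrelim

variable (k : Type u) [Field k] (A : Type u) [Ring A] [Algebra k A] [FiniteDimensional k A]
variable (B : Type u) [Ring B] [Algebra k B] [FiniteDimensional k B]

/-- The `k`-module structure on (the carrier of) a finitely generated module over the
`k`-algebra `B`, by restriction of scalars. -/
noncomputable instance modk (N : FGModuleCat B) : Module k N :=
  Module.compHom N (algebraMap k B)

noncomputable instance modk_tower (N : FGModuleCat B) : IsScalarTower k B N :=
  ⟨fun c b x => by rw [Algebra.smul_def, mul_smul]; rfl⟩

noncomputable instance modk_smulcomm (N : FGModuleCat B) : SMulCommClass k B N :=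
  ⟨fun c b x => by
    show (algebraMap k B c) • b • x = b • (algebraMap k B c) • x
    rw [← mul_smul, ← mul_smul, Algebra.commutes]⟩

noncomputable instance modk_smulcomm' (N : FGModuleCat B) : SMulCommClass B k N :=
  SMulCommClass.symm k B N

/-- The underlying `k`-linear map of a morphism of finitely generated `B`-modules. -/
noncomputable def klin {X Y : FGModuleCat B} (f : X ⟶ Y) : X →ₗ[k] Y where
  toFun := f
  map_add' := f.hom.hom.map_add
  map_smul' c x := by
    show f ((algebraMap k B c) • x) = (algebraMap k B c) • f x
    exact f.hom.hom.map_smul _ x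

/-- Left multiplication by an element `b` of `B` as a `k`-linear endomorphism
of a `B`-module. -/
noncomputable def bsmul (b : B) (X : FGModuleCat B) : X →ₗ[k] X where
  toFun x := b • x
  map_add' x y := by show b • (x + y) = b • x + b • y; rw [smul_add]
  map_smul' c x := by
    show b • (algebraMap k B c) • x = (algebraMap k B c) • b • x
    rw [← mul_smul, ← mul_smul, Algebra.commutes]

/-- The regular module `A`, as an object of the category of finitely generated
`A`-modules. -/
def Aself : FGModuleCat A := ⟨ModuleCat.of A A, Module.Finite.self A⟩

/-- Right multiplication `x ↦ x * a` on `A`, as a left `A`-linear map. -/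
def rmulAux (a : A) : A →ₗ[A] A where
  toFun x := x * a
  map_add' x y := add_mul x y a
  map_smul' r x := mul_assoc r x a

/-- Right multiplication `x ↦ x * a` on the regular module, a morphism of left
`A`-modules. -/
def rmul (a : A) : Aself A ⟶ Aself A := ⟨ModuleCat.ofHom (rmulAux A a)⟩

/-- The carrier of the co-regular bimodule `A* = Module.Dual k A`. -/
abbrev Coreg : Type u := Module.Dual k A

/-- The left `A`-action on `A*`, dual to the right regular action:
`(a • φ) x = φ (x * a)`. -/
noncomputable instance : SMul A (Coreg k A) :=
  ⟨fun a φ => LinearMap.comp φ (LinearMap.mulRight k a)⟩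

lemma coreg_smul_apply (a : A) (φ : Coreg k A) (x : A) :
    (a • φ : Coreg k A) x = φ (x * a) := rfl

noncomputable instance : MulAction A (Coreg k A) where
  one_smul φ := by ext x; simp [coreg_smul_apply]
  mul_smul a b φ := by ext x; simp [coreg_smul_apply, mul_assoc]

noncomputable instance : DistribMulAction A (Coreg k A) where
  smul_zero a := by ext x; simp [coreg_smul_apply]
  smul_add a φ ψ := by ext x; simp [coreg_smul_apply]

noncomputable instance : Module A (Coreg k A) where
  add_smul a b φ := by ext x; simp [coreg_smul_apply, mul_add]
  zero_smul φ := by ext x; simp [coreg_smul_apply]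

noncomputable instance : IsScalarTower k A (Coreg k A) :=
  ⟨fun c a φ => by
    ext x
    rw [coreg_smul_apply]
    show φ (x * (c • a)) = (c • (a • φ : Coreg k A)) x
    rw [Algebra.mul_smul_comm, map_smul]
    rfl⟩

noncomputable instance : Module.Finite A (Coreg k A) := by
  have : Module.Finite k (Coreg k A) := inferInstance
  exact Module.Finite.of_restrictScalars_finite k A (Coreg k A)

/-- The co-regular module `A*`, as an object of the category of finitely generated
`A`-modules (with the left action dual to the right regular action). -/
noncomputable def coreg : FGModuleCat A := ⟨ModuleCat.of A (Coreg k A), inferInstanceAs (Module.Finite A (Coreg k A))⟩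

/-- The right `A`-action `(φ · a) x = φ (a * x)` on the co-regular module `A*`,
as a left `A`-linear map. -/
noncomputable def coregRmulAux (a : A) : Coreg k A →ₗ[A] Coreg k A where
  toFun φ := LinearMap.comp φ (LinearMap.mulLeft k a)
  map_add' φ ψ := by ext x; simp
  map_smul' b φ := by
    ext x
    show ((b • φ : Coreg k A) : Module.Dual k A) (a * x) = (b • _ : Coreg k A) x
    rw [coreg_smul_apply, coreg_smul_apply]
    show φ (a * x * b) = φ (a * (x * b))
    rw [mul_assoc]

/-- The right `A`-action on the co-regular module, as a morphism of left `A`-modules. -/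
noncomputable def coregRmul (a : A) : coreg k A ⟶ coreg k A := ⟨ModuleCat.ofHom (coregRmulAux k A a)⟩

end ModulePrelim

end EW

open scoped TensorProduct

namespace EW

section PeterWeyl

variable (k : Type u) [Field k] (A : Type u) [Ring A] [Algebra k A] [FiniteDimensional k A]

noncomputable instance mfin (m : FGModuleCat A) : Module.Finite k m :=
  Module.Finite.trans A m

/-- The right `A`-action on the `m`-component `m ⊗ₖ m*` of the Peter–Weyl integrand,
through the dual factor: `(x ⊗ φ) · a = x ⊗ (φ ∘ (a • ·))`. -/
noncomputable def rT (a : A) (m : FGModuleCat A) :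
    (↥m ⊗[k] Module.Dual k ↥m) →ₗ[k] (↥m ⊗[k] Module.Dual k ↥m) :=
  TensorProduct.map LinearMap.id ((EW.bsmul k A a m).dualMap)

end PeterWeyl

end EW

open scoped TensorProduct

namespace EW

section Aux

variable (k : Type u) [Field k] (A : Type u) [Ring A] [Algebra k A] [FiniteDimensional k A]

/-- Contraction equivalence `n ⊗ m* ≃ Hom_k(m, n)`. -/
noncomputable def eqv (m n : FGModuleCat.{u} A) :
    (↥n ⊗[k] Module.Dual k ↥m) ≃ₗ[k] (↥m →ₗ[k] ↥n) :=
  (TensorProduct.comm k ↥n (Module.Dual k ↥m)).trans (dualTensorHomEquiv k ↥m ↥n)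

lemma eqv_tmul (m n : FGModuleCat.{u} A) (x : ↥n) (φ : Module.Dual k ↥m) (y : ↥m) :
    eqv k A m n (x ⊗ₜ[k] φ) y = φ y • x := by
  simp [eqv]

lemma eqv_map_left {m m' n : FGModuleCat.{u} A} (f : ↥m' →ₗ[k] ↥n)
    (t : ↥m' ⊗[k] Module.Dual k ↥m) :
    eqv k A m n (TensorProduct.map f LinearMap.id t) = f ∘ₗ eqv k A m m' t := by
  induction t with
  | zero => simp
  | tmul x φ =>
      apply LinearMap.ext; intro y
      simp [eqv_tmul]
  | add t t' ht ht' =>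
      rw [map_add, map_add, map_add, ht, ht', LinearMap.comp_add]

lemma eqv_map_right {m m' n : FGModuleCat.{u} A} (g : ↥m →ₗ[k] ↥m')
    (t : ↥n ⊗[k] Module.Dual k ↥m') :
    eqv k A m n (TensorProduct.map LinearMap.id g.dualMap t) = (eqv k A m' n t) ∘ₗ g := by
  induction t with
  | zero => simp
  | tmul x φ =>
      apply LinearMap.ext; intro y
      simp [eqv_tmul]
  | add t t' ht ht' =>
      rw [map_add, map_add, map_add, ht, ht', LinearMap.add_comp]

lemma asmul_tensor (a : A) (m : FGModuleCat.{u} A) {W : Type u} [AddCommGroup W]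
    [Module k W] (t : ↥m ⊗[k] W) :
    a • t = TensorProduct.map (bsmul k A a m) LinearMap.id t := by
  induction t with
  | zero => simp
  | tmul x w => rw [TensorProduct.smul_tmul']; rfl
  | add t t' ht ht' =>
      rw [smul_add, ht, ht']; exact (map_add _ _ _).symm

lemma eqv_smul (a : A) {m n : FGModuleCat.{u} A} (t : ↥n ⊗[k] Module.Dual k ↥m) :
    eqv k A m n (a • t) = bsmul k A a n ∘ₗ eqv k A m n t := by
  rw [asmul_tensor, eqv_map_left]

lemma eqv_rT (a : A) {m : FGModuleCat.{u} A} (t : ↥m ⊗[k] Module.Dual k ↥m) :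
    eqv k A m m (rT k A a m t) = (eqv k A m m t) ∘ₗ bsmul k A a m := by
  rw [rT, eqv_map_right]

lemma bsmul_add (a b : A) (m : FGModuleCat.{u} A) :
    bsmul k A (a + b) m = bsmul k A a m + bsmul k A b m := by
  apply LinearMap.ext; intro x
  show (a + b) • x = a • x + b • x
  rw [add_smul]

lemma bsmul_mul (a b : A) (m : FGModuleCat.{u} A) :
    bsmul k A (a * b) m = bsmul k A a m ∘ₗ bsmul k A b m := by
  apply LinearMap.ext; intro x
  show (a * b) • x = a • b • x
  rw [mul_smul]

/-- The wedge exhibiting the regular bimodule as the end. -/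
noncomputable def iW (m : FGModuleCat.{u} A) (a : A) : ↥m ⊗[k] Module.Dual k ↥m :=
  (eqv k A m m).symm (bsmul k A a m)

lemma eqv_iW (m : FGModuleCat.{u} A) (a : A) :
    eqv k A m m (iW k A m a) = bsmul k A a m :=
  (eqv k A m m).apply_symm_apply _

/-- Action on a fixed element `x : m`, as an `A`-linear map. -/
def actHomAux (m : FGModuleCat.{u} A) (x : ↥m) : A →ₗ[A] ↥m :=
  { toFun := fun a => a • x
    map_add' := fun a b => add_smul a b x
    map_smul' := fun r a => mul_smul r a x }

/-- Action on a fixed element `x : m`, as a morphism `A ⟶ m` of `A`-modules. -/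
def actHom (m : FGModuleCat.{u} A) (x : ↥m) : Aself A ⟶ m := ⟨ModuleCat.ofHom (actHomAux A m x)⟩

/-- The canonical identification `↥(Aself A) → A`. -/
def toA : ↥(Aself A) → A := fun a => a

/-- The canonical identification `A → ↥(Aself A)`. -/
def ofA : A → ↥(Aself A) := fun a => a

lemma klin_actHom_apply (m : FGModuleCat.{u} A) (x : ↥m) (y : ↥(Aself A)) :
    klin k A (actHom A m x) y = toA A y • x := rfl

lemma klin_rmul_apply (a : A) (y : ↥(Aself A)) :
    klin k A (rmul A a) y = ofA A (toA A y * a) := rfl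

lemma aself_smul (b : A) (y : ↥(Aself A)) : b • y = ofA A (b * toA A y) := rfl

lemma toA_ofA (a : A) : toA A (ofA A a) = a := rfl

/-- Action on a fixed element `x : m`, as a `k`-linear map `A →ₗ[k] m`
(with the standard `k`-module structure on `A`). -/
noncomputable def actK (m : FGModuleCat.{u} A) (x : ↥m) : A →ₗ[k] ↥m :=
  { toFun := fun a => a • x
    map_add' := fun a b => add_smul a b x
    map_smul' := fun c a => by
      show (c • a) • x = c • (a • x)
      rw [Algebra.smul_def, mul_smul]
      rfl }

/-- The coend wedge: matrix coefficients. -/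
noncomputable def icMap (m : FGModuleCat.{u} A) :
    (↥m ⊗[k] Module.Dual k ↥m) →ₗ[k] Coreg k A :=
  TensorProduct.lift
    { toFun := fun x => LinearMap.lcomp k k (actK k A m x)
      map_add' := fun x y => by
        apply LinearMap.ext; intro φ; apply LinearMap.ext; intro a
        show φ (a • (x + y)) = φ (a • x) + φ (a • y)
        rw [smul_add, map_add]
      map_smul' := fun c x => by
        apply LinearMap.ext; intro φ; apply LinearMap.ext; intro a
        show φ (a • (c • x)) = c • φ (a • x)
        rw [smul_comm, map_smul] }

lemma icMap_tmul (m : FGModuleCat.{u} A) (x : ↥m) (φ : Module.Dual k ↥m) (a : A) :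
    icMap k A m (x ⊗ₜ[k] φ) a = φ (a • x) := rfl

/-- Conversion from the co-regular module to duals of the regular module. -/
noncomputable def ofCoreg (φ : Coreg k A) : Module.Dual k ↥(Aself A) :=
  { toFun := φ
    map_add' := φ.map_add
    map_smul' := fun c a => by
      show φ ((algebraMap k A c) * toA A a) = c • φ (toA A a)
      rw [← Algebra.smul_def]
      exact φ.map_smul c _ }

lemma ofCoreg_apply (φ : Coreg k A) (a : ↥(Aself A)) : ofCoreg k A φ a = φ (toA A a) := rfl

lemma ofCoreg_add (φ ψ : Coreg k A) :
    ofCoreg k A (φ + ψ) = ofCoreg k A φ + ofCoreg k A ψ := by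
  apply LinearMap.ext; intro a; rfl

lemma icMap_smul (m : FGModuleCat.{u} A) (a : A) (t : ↥m ⊗[k] Module.Dual k ↥m) :
    icMap k A m (a • t) = a • icMap k A m t := by
  induction t with
  | zero => rw [smul_zero, map_zero, smul_zero]
  | tmul x φ =>
      rw [TensorProduct.smul_tmul']
      apply LinearMap.ext; intro b
      rw [icMap_tmul, coreg_smul_apply, icMap_tmul, mul_smul]
  | add t t' ht ht' => rw [smul_add, map_add, ht, ht', map_add, smul_add]

lemma icMap_rT (m : FGModuleCat.{u} A) (a : A) (t : ↥m ⊗[k] Module.Dual k ↥m) :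
    icMap k A m (rT k A a m t) = coregRmulAux k A a (icMap k A m t) := by
  induction t with
  | zero => rw [map_zero, map_zero, map_zero]
  | tmul x φ =>
      apply LinearMap.ext; intro b
      show icMap k A m (x ⊗ₜ[k] (bsmul k A a m).dualMap φ) b
          = icMap k A m (x ⊗ₜ[k] φ) (a * b)
      rw [icMap_tmul, icMap_tmul]
      show φ (a • b • x) = φ ((a * b) • x)
      rw [mul_smul]
  | add t t' ht ht' => rw [map_add, map_add, ht, ht', map_add, map_add]

lemma icMap_dinat {m n : FGModuleCat.{u} A} (f : m ⟶ n) (t : ↥m ⊗[k] Module.Dual k ↥n) :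
    icMap k A m (TensorProduct.map LinearMap.id (klin k A f).dualMap t)
      = icMap k A n (TensorProduct.map (klin k A f) LinearMap.id t) := by
  induction t with
  | zero => rw [map_zero, map_zero, map_zero, map_zero]
  | tmul x φ =>
      apply LinearMap.ext; intro a
      show icMap k A m (x ⊗ₜ[k] (klin k A f).dualMap φ) a
          = icMap k A n (klin k A f x ⊗ₜ[k] φ) a
      rw [icMap_tmul, icMap_tmul]
      exact congrArg φ (f.hom.hom.map_smul a x)
  | add t t' ht ht' => simp only [map_add, ht, ht']

lemma icMap_one_ofCoreg (φ : Coreg k A) :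
    icMap k A (Aself A) (ofA A 1 ⊗ₜ[k] ofCoreg k A φ) = φ := by
  apply LinearMap.ext; intro a
  rw [icMap_tmul, ofCoreg_apply]
  show φ (a * 1) = φ a
  rw [mul_one]

lemma ofCoreg_smul (a : A) (φ : Coreg k A) :
    ofCoreg k A (a • φ) = (klin k A (rmul A a)).dualMap (ofCoreg k A φ) := by
  apply LinearMap.ext; intro x; rfl

lemma ofCoreg_rmulAux (a : A) (φ : Coreg k A) :
    ofCoreg k A (coregRmulAux k A a φ) = (bsmul k A a (Aself A)).dualMap (ofCoreg k A φ) := by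
  apply LinearMap.ext; intro x; rfl

lemma ofCoreg_icMap_tmul (m : FGModuleCat.{u} A) (x : ↥m) (φ : Module.Dual k ↥m) :
    ofCoreg k A (icMap k A m (x ⊗ₜ[k] φ)) = (klin k A (actHom A m x)).dualMap φ := by
  apply LinearMap.ext; intro a; rfl

end Aux

end EW

/-- **Peter–Weyl for the (co)regular bimodule.**
For any finite-dimensional `k`-algebra `A`, the end `∫_{m ∈ A-Mod} m ⊗ₖ m*` of the
bifunctor `(m, n) ↦ m ⊗ₖ n*` (valued in `A`-bimodules) is isomorphic, as an `A`-bimodule,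
to the regular bimodule `A`; and the coend `∫^{m ∈ A-Mod} m ⊗ₖ m*` is isomorphic, as an
`A`-bimodule, to the co-regular bimodule `A*`.  This is expressed by exhibiting the
regular bimodule `A` as an end (universal wedge `i`) and the co-regular bimodule `A*` as a
coend (universal wedge `ic`), where wedges from/to a test `A`-bimodule `Z` are dinatural
families of bimodule maps, the left `A`-action on `m ⊗ₖ m*` is on the first factor and the
right `A`-action `EW.rT` on the second. -/
theorem statement_3 (k : Type u) [Field k]
    (A : Type u) [Ring A] [Algebra k A] [FiniteDimensional k A] :
    (∃ i : ∀ m : FGModuleCat.{u} A, A → (↥m ⊗[k] Module.Dual k ↥m),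
      (∀ (m : FGModuleCat.{u} A) (x y : A), i m (x + y) = i m x + i m y) ∧
      (∀ (m : FGModuleCat.{u} A) (a x : A), i m (a * x) = a • i m x) ∧
      (∀ (m : FGModuleCat.{u} A) (x a : A), i m (x * a) = EW.rT k A a m (i m x)) ∧
      (∀ {m n : FGModuleCat.{u} A} (f : m ⟶ n) (x : A),
        TensorProduct.map (EW.klin k A f) LinearMap.id (i m x)
          = TensorProduct.map LinearMap.id ((EW.klin k A f).dualMap) (i n x)) ∧
      (∀ (Z : Type u) [AddCommGroup Z] [Module A Z] [Module Aᵐᵒᵖ Z]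
          [SMulCommClass A Aᵐᵒᵖ Z]
        (j : ∀ m : FGModuleCat.{u} A, Z → (↥m ⊗[k] Module.Dual k ↥m)),
        (∀ (m : FGModuleCat.{u} A) (z z' : Z), j m (z + z') = j m z + j m z') →
        (∀ (m : FGModuleCat.{u} A) (a : A) (z : Z), j m (a • z) = a • j m z) →
        (∀ (m : FGModuleCat.{u} A) (a : A) (z : Z), j m ((MulOpposite.op a) • z) = EW.rT k A a m (j m z)) →
        (∀ {m n : FGModuleCat.{u} A} (f : m ⟶ n) (z : Z),
          TensorProduct.map (EW.klin k A f) LinearMap.id (j m z)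
            = TensorProduct.map LinearMap.id ((EW.klin k A f).dualMap) (j n z)) →
        ∃! κ : Z →+ A, (∀ (a : A) (z : Z), κ (a • z) = a * κ z) ∧
          (∀ (a : A) (z : Z), κ ((MulOpposite.op a) • z) = κ z * a) ∧
          (∀ (m : FGModuleCat.{u} A) (z : Z), i m (κ z) = j m z))) ∧
    (∃ ic : ∀ m : FGModuleCat.{u} A, (↥m ⊗[k] Module.Dual k ↥m) → EW.Coreg k A,
      (∀ (m : FGModuleCat.{u} A) (t t' : ↥m ⊗[k] Module.Dual k ↥m), ic m (t + t') = ic m t + ic m t') ∧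
      (∀ (m : FGModuleCat.{u} A) (a : A) (t : ↥m ⊗[k] Module.Dual k ↥m), ic m (a • t) = a • ic m t) ∧
      (∀ (m : FGModuleCat.{u} A) (a : A) (t : ↥m ⊗[k] Module.Dual k ↥m),
        ic m (EW.rT k A a m t) = EW.coregRmulAux k A a (ic m t)) ∧
      (∀ {m n : FGModuleCat.{u} A} (f : m ⟶ n) (t : ↥m ⊗[k] Module.Dual k ↥n),
        ic m (TensorProduct.map LinearMap.id ((EW.klin k A f).dualMap) t)
          = ic n (TensorProduct.map (EW.klin k A f) LinearMap.id t)) ∧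
      (∀ (Z : Type u) [AddCommGroup Z] [Module A Z] [Module Aᵐᵒᵖ Z]
          [SMulCommClass A Aᵐᵒᵖ Z]
        (j : ∀ m : FGModuleCat.{u} A, (↥m ⊗[k] Module.Dual k ↥m) → Z),
        (∀ (m : FGModuleCat.{u} A) (t t' : ↥m ⊗[k] Module.Dual k ↥m), j m (t + t') = j m t + j m t') →
        (∀ (m : FGModuleCat.{u} A) (a : A) (t : ↥m ⊗[k] Module.Dual k ↥m), j m (a • t) = a • j m t) →
        (∀ (m : FGModuleCat.{u} A) (a : A) (t : ↥m ⊗[k] Module.Dual k ↥m),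
          j m (EW.rT k A a m t) = (MulOpposite.op a) • j m t) →
        (∀ {m n : FGModuleCat.{u} A} (f : m ⟶ n) (t : ↥m ⊗[k] Module.Dual k ↥n),
          j m (TensorProduct.map LinearMap.id ((EW.klin k A f).dualMap) t)
            = j n (TensorProduct.map (EW.klin k A f) LinearMap.id t)) →
        ∃! κ : EW.Coreg k A →+ Z,
          (∀ (a : A) (φ : EW.Coreg k A), κ (a • φ) = a • κ φ) ∧
          (∀ (a : A) (φ : EW.Coreg k A),
            κ (EW.coregRmulAux k A a φ) = (MulOpposite.op a) • κ φ) ∧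
          (∀ (m : FGModuleCat.{u} A) (t : ↥m ⊗[k] Module.Dual k ↥m), κ (ic m t) = j m t))) := by
  
  constructor
  · -- the end: the regular bimodule
    refine ⟨EW.iW k A, ?_, ?_, ?_, ?_, ?_⟩
    · intro m x y
      apply (EW.eqv k A m m).injective
      rw [EW.eqv_iW, map_add, EW.eqv_iW, EW.eqv_iW, EW.bsmul_add]
    · intro m a x
      apply (EW.eqv k A m m).injective
      rw [EW.eqv_iW, EW.eqv_smul, EW.eqv_iW, EW.bsmul_mul]
    · intro m x a
      apply (EW.eqv k A m m).injective
      rw [EW.eqv_iW, EW.eqv_rT, EW.eqv_iW, EW.bsmul_mul]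
    · intro m n f x
      apply (EW.eqv k A m n).injective
      rw [EW.eqv_map_left, EW.eqv_map_right, EW.eqv_iW, EW.eqv_iW]
      apply LinearMap.ext; intro y
      exact f.hom.hom.map_smul x y
    · intro Z _ _ _ _ j jadd jsl jsr jdin
      refine ⟨AddMonoidHom.mk'
        (fun z => EW.toA A
          (EW.eqv k A (EW.Aself A) (EW.Aself A) (j (EW.Aself A) z) (EW.ofA A 1)))
        (fun z z' => by simp only [jadd, map_add, LinearMap.add_apply]; rfl),
        ⟨?_, ?_, ?_⟩, ?_⟩
      · intro a z
        show EW.toA A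
            (EW.eqv k A (EW.Aself A) (EW.Aself A) (j (EW.Aself A) (a • z)) (EW.ofA A 1))
          = a * _
        rw [jsl, EW.eqv_smul, LinearMap.comp_apply]
        rfl
      · intro a z
        show EW.toA A
            (EW.eqv k A (EW.Aself A) (EW.Aself A)
              (j (EW.Aself A) (MulOpposite.op a • z)) (EW.ofA A 1)) = _ * a
        rw [jsr, EW.eqv_rT, LinearMap.comp_apply]
        have e1 : EW.bsmul k A a (EW.Aself A) (EW.ofA A 1) = EW.ofA A a := by
          show EW.ofA A (a * 1) = EW.ofA A a
          rw [mul_one]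
        rw [e1]
        have hd := jdin (EW.rmul A a) z
        have h1 := congrArg (EW.eqv k A (EW.Aself A) (EW.Aself A)) hd
        rw [EW.eqv_map_left, EW.eqv_map_right] at h1
        have h2 := LinearMap.congr_fun h1 (EW.ofA A 1)
        rw [LinearMap.comp_apply, LinearMap.comp_apply, EW.klin_rmul_apply,
          EW.klin_rmul_apply, EW.toA_ofA, one_mul] at h2
        rw [← h2]
        rfl
      · intro m z
        apply (EW.eqv k A m m).injective
        rw [EW.eqv_iW]
        apply LinearMap.ext; intro x
        have hd := jdin (EW.actHom A m x) z
        have h1 := congrArg (EW.eqv k A (EW.Aself A) m) hd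
        rw [EW.eqv_map_left, EW.eqv_map_right] at h1
        have h2 := LinearMap.congr_fun h1 (EW.ofA A 1)
        rw [LinearMap.comp_apply, LinearMap.comp_apply, EW.klin_actHom_apply,
          EW.klin_actHom_apply, EW.toA_ofA, one_smul] at h2
        exact h2
      · rintro κ' ⟨h1', h2', h3'⟩
        apply AddMonoidHom.ext; intro z
        have h := congrArg (EW.eqv k A (EW.Aself A) (EW.Aself A)) (h3' (EW.Aself A) z)
        rw [EW.eqv_iW] at h
        have h2 := LinearMap.congr_fun h (EW.ofA A 1)
        show κ' z = EW.toA A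
          (EW.eqv k A (EW.Aself A) (EW.Aself A) (j (EW.Aself A) z) (EW.ofA A 1))
        rw [← h2]
        show κ' z = κ' z * 1
        rw [mul_one]
  · -- the coend: the co-regular bimodule
    refine ⟨fun m t => EW.icMap k A m t, ?_, ?_, ?_, ?_, ?_⟩
    · intro m t t'; exact map_add _ _ _
    · intro m a t; exact EW.icMap_smul k A m a t
    · intro m a t; exact EW.icMap_rT k A m a t
    · intro m n f t; exact EW.icMap_dinat k A f t
    · intro Z _ _ _ _ j jadd jsl jsr jdin
      have jz : ∀ m : FGModuleCat.{u} A, j m 0 = 0 := by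
        intro m
        have h := jadd m 0 0
        rw [add_zero] at h
        exact left_eq_add.mp h
      refine ⟨AddMonoidHom.mk'
        (fun φ => j (EW.Aself A) (EW.ofA A 1 ⊗ₜ[k] EW.ofCoreg k A φ))
        (fun φ ψ => by simp only [EW.ofCoreg_add, TensorProduct.tmul_add, jadd]),
        ⟨?_, ?_, ?_⟩, ?_⟩
      · intro a φ
        show j (EW.Aself A) (EW.ofA A 1 ⊗ₜ[k] EW.ofCoreg k A (a • φ)) = a • _
        rw [EW.ofCoreg_smul]
        have e : (EW.ofA A 1 ⊗ₜ[k] (EW.klin k A (EW.rmul A a)).dualMap (EW.ofCoreg k A φ))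
            = TensorProduct.map LinearMap.id (EW.klin k A (EW.rmul A a)).dualMap
                (EW.ofA A 1 ⊗ₜ[k] EW.ofCoreg k A φ) := by
          rw [TensorProduct.map_tmul]; rfl
        rw [e, jdin (EW.rmul A a)]
        have e2 : TensorProduct.map (EW.klin k A (EW.rmul A a)) LinearMap.id
              (EW.ofA A 1 ⊗ₜ[k] EW.ofCoreg k A φ)
            = a • (EW.ofA A 1 ⊗ₜ[k] EW.ofCoreg k A φ) := by
          rw [TensorProduct.map_tmul, TensorProduct.smul_tmul']
          congr 1
          show EW.ofA A (1 * a) = EW.ofA A (a * 1)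
          rw [one_mul, mul_one]
        rw [e2, jsl]
        rfl
      · intro a φ
        show j (EW.Aself A)
            (EW.ofA A 1 ⊗ₜ[k] EW.ofCoreg k A (EW.coregRmulAux k A a φ)) = _
        rw [EW.ofCoreg_rmulAux]
        have e : (EW.ofA A 1 ⊗ₜ[k] (EW.bsmul k A a (EW.Aself A)).dualMap (EW.ofCoreg k A φ))
            = EW.rT k A a (EW.Aself A) (EW.ofA A 1 ⊗ₜ[k] EW.ofCoreg k A φ) := by
          rw [EW.rT, TensorProduct.map_tmul]; rfl
        rw [e, jsr]
        rfl
      · intro m t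
        induction t with
        | zero => simp only [map_zero, jz]
        | tmul x φ =>
            show j (EW.Aself A)
                (EW.ofA A 1 ⊗ₜ[k] EW.ofCoreg k A (EW.icMap k A m (x ⊗ₜ[k] φ)))
              = j m (x ⊗ₜ[k] φ)
            rw [EW.ofCoreg_icMap_tmul]
            have e : (EW.ofA A 1 ⊗ₜ[k] (EW.klin k A (EW.actHom A m x)).dualMap φ)
                = TensorProduct.map LinearMap.id (EW.klin k A (EW.actHom A m x)).dualMap
                    (EW.ofA A 1 ⊗ₜ[k] φ) := by
              rw [TensorProduct.map_tmul]; rfl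
            rw [e, jdin (EW.actHom A m x)]
            have e2 : TensorProduct.map (EW.klin k A (EW.actHom A m x)) LinearMap.id
                  (EW.ofA A 1 ⊗ₜ[k] φ) = x ⊗ₜ[k] φ := by
              rw [TensorProduct.map_tmul]
              congr 1
              show (1 : A) • x = x
              rw [one_smul]
            rw [e2]
        | add t t' ht ht' => simp only [map_add, jadd, ht, ht']
      · rintro κ' ⟨h1', h2', h3'⟩
        apply AddMonoidHom.ext; intro φ
        have h := h3' (EW.Aself A) (EW.ofA A 1 ⊗ₜ[k] EW.ofCoreg k A φ)
        simp only [EW.icMap_one_ofCoreg] at h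
        exact h
end

section
/- Let A and C be finite k-linear categories and F : A → C a k-linear functor. Then there is a natural isomorphism ∫_{a ∈ A} Hom_A(-, a)* ⊗ F(a) ≅ F of linear functors, where Hom_A(-, a)* denotes the k-linear dual of the Hom space (the Yoneda/convolution property of the dual Hom functor). -/
open CategoryTheory CategoryTheory.Limits Opposite

universe w v u v₁ u₁ v₂ u₂ v₃ u₃ v₄ u₄

/-- **convolution property of the dual Hom functor.**
Let `A` and `C` be finite `k`-linear categories and `F : A ⥤ C` a `k`-linear functor.  Then
there is a natural isomorphism `∫_{a ∈ A} Hom_A(-, a)* ⊗ F(a) ≅ F` of linear functors.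
For every `x ∈ A` the object `F.obj x` is the end `∫_{a} Hom_A(x,a)* ⊗ F(a)`:  morphisms
`d ⟶ Hom_A(x,a)* ⊗ F(a)` are identified with linear maps `Hom_A(x,a) →ₗ[k] (d ⟶ F(a))`,
so a dinatural family into the integrand from `d` is a family `θ` as below, and the
assertion is that every such family factors uniquely through the canonical family
`g ↦ F.map g` via a morphism `κ : d ⟶ F.obj x`. -/
theorem statement_5 (k : Type u) [Field k]
    {A : Type u₁} [Category.{v₁} A] [Preadditive A] [CategoryTheory.Linear k A]
    {C : Type u₂} [Category.{v₂} C] [Preadditive C] [CategoryTheory.Linear k C]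
    [EW.IsFiniteLinear k A] [EW.IsFiniteLinear k C]
    (F : A ⥤ C) [F.Additive] [F.Linear k] (x : A) (d : C)
    (θ : ∀ a : A, (x ⟶ a) →ₗ[k] (d ⟶ F.obj a))
    (hθ : ∀ {a b : A} (f : a ⟶ b) (g : x ⟶ a), θ b (g ≫ f) = θ a g ≫ F.map f) :
    ∃! κ : d ⟶ F.obj x, ∀ (a : A) (g : x ⟶ a), θ a g = κ ≫ F.map g := by
  refine ⟨θ x (𝟙 x), fun a g => ?_, fun κ hκ => ?_⟩
  · simpa using hθ g (𝟙 x)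
  · simpa using (hκ x (𝟙 x)).symm
end

section
/- Let A and C be finite k-linear categories. For a left exact functor F : A → C with left adjoint F^l, there is an isomorphism of coends ∫^{a ∈ A} ā ⊠ F(a) ≅ ∫^{c ∈ C} (F^l(c))‾ ⊠ c in A^op ⊠ C; dually, for a right exact functor G with right adjoint G^r, there is an isomorphism of ends ∫_{a ∈ A} ā ⊠ G(a) ≅ ∫_{c ∈ C} (G^r(c))‾ ⊠ c. -/
open CategoryTheory CategoryTheory.Limits Opposite

universe w v u v₁ u₁ v₂ u₂ v₃ u₃ v₄ u₄

namespace EW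

variable (k : Type u) [Field k]

section Statement10Aux

variable {A : Type u₁} [Category.{v₁} A] {C : Type u₂} [Category.{v₂} C]
  {D : Type u₃} [Category.{v₃} D]

theorem statement10_coend_iso (box : Aᵒᵖ ⥤ C ⥤ D) (F : A ⥤ C) (Fl : C ⥤ A) (adjF : Fl ⊣ F)
    (E₁ : BoxCoend box (𝟭 A) F) (E₂ : BoxCoend box Fl (𝟭 C)) :
    Nonempty (E₁.pt ≅ E₂.pt) := by
  have dinat1 : ∀ {a a' : A} (f : a ⟶ a'),
      (box.map ((𝟭 A).map f).op).app (F.obj a) ≫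
          ((box.map (adjF.counit.app a).op).app (F.obj a) ≫ E₂.ι (F.obj a))
        = (box.obj (op ((𝟭 A).obj a'))).map (F.map f) ≫
          ((box.map (adjF.counit.app a').op).app (F.obj a') ≫ E₂.ι (F.obj a')) := by
    intro a a' f
    have h1 : (adjF.counit.app a ≫ f : Fl.obj (F.obj a) ⟶ a')
        = Fl.map (F.map f) ≫ adjF.counit.app a' := (adjF.counit.naturality f).symm
    have h2 := E₂.dinat (F.map f)
    have h3 := (box.map (adjF.counit.app a').op).naturality (F.map f)
    simp only [Functor.id_obj, Functor.id_map, Functor.comp_obj, Functor.comp_map] at h2 h3 ⊢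
    have key : box.map f.op ≫ box.map (adjF.counit.app a).op
        = box.map (adjF.counit.app a').op ≫ box.map (Fl.map (F.map f)).op := by
      rw [← box.map_comp, ← box.map_comp, ← op_comp, ← op_comp, h1]
    rw [← Category.assoc, ← NatTrans.comp_app, key, NatTrans.comp_app, Category.assoc,
      h2, ← Category.assoc, ← h3, Category.assoc]
  obtain ⟨κ, hκ, -⟩ := E₁.universal E₂.pt
    (fun a => (box.map (adjF.counit.app a).op).app (F.obj a) ≫ E₂.ι (F.obj a))
    (fun {a a'} f => dinat1 f)
  have dinat2 : ∀ {c c' : C} (g : c ⟶ c'),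
      (box.map (Fl.map g).op).app ((𝟭 C).obj c) ≫
          ((box.obj (op (Fl.obj c))).map (adjF.unit.app c) ≫ E₁.ι (Fl.obj c))
        = (box.obj (op (Fl.obj c'))).map ((𝟭 C).map g) ≫
          ((box.obj (op (Fl.obj c'))).map (adjF.unit.app c') ≫ E₁.ι (Fl.obj c')) := by
    intro c c' g
    have h1 : (adjF.unit.app c ≫ F.map (Fl.map g) : c ⟶ F.obj (Fl.obj c'))
        = g ≫ adjF.unit.app c' := by simpa using (adjF.unit.naturality g).symm
    have h2 := E₁.dinat (Fl.map g)
    have h3 := (box.map (Fl.map g).op).naturality (adjF.unit.app c)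
    simp only [Functor.id_obj, Functor.id_map, Functor.comp_obj, Functor.comp_map] at h2 h3 ⊢
    rw [← Category.assoc, ← h3, Category.assoc, h2, ← Category.assoc, ← Functor.map_comp,
      h1, Functor.map_comp, Category.assoc]
  obtain ⟨l, hl, -⟩ := E₂.universal E₁.pt
    (fun c => (box.obj (op (Fl.obj c))).map (adjF.unit.app c) ≫ E₁.ι (Fl.obj c))
    (fun {c c'} g => dinat2 g)
  obtain ⟨m₁, -, hu₁⟩ := E₁.universal E₁.pt E₁.ι (fun {a a'} f => E₁.dinat f)
  obtain ⟨m₂, -, hu₂⟩ := E₂.universal E₂.pt E₂.ι (fun {c c'} f => E₂.dinat f)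
  have inv1 : κ ≫ l = 𝟙 E₁.pt := by
    refine (hu₁ (κ ≫ l) ?_).trans (hu₁ (𝟙 E₁.pt) (fun a => by simp)).symm
    intro a
    show E₁.ι a ≫ κ ≫ l = E₁.ι a
    rw [← Category.assoc, hκ a, Category.assoc, hl (F.obj a)]
    have h3 := (box.map (adjF.counit.app a).op).naturality (adjF.unit.app (F.obj a))
    have h2 := E₁.dinat (adjF.counit.app a)
    simp only [Functor.id_obj, Functor.id_map, Functor.comp_obj, Functor.comp_map]
      at h2 h3 ⊢
    rw [← Category.assoc, ← h3, Category.assoc, h2, ← Category.assoc,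
      ← Functor.map_comp, adjF.right_triangle_components a,
      CategoryTheory.Functor.map_id, Category.id_comp]
  have inv2 : l ≫ κ = 𝟙 E₂.pt := by
    refine (hu₂ (l ≫ κ) ?_).trans (hu₂ (𝟙 E₂.pt) (fun c => by simp)).symm
    intro c
    show E₂.ι c ≫ l ≫ κ = E₂.ι c
    rw [← Category.assoc, hl c, Category.assoc, hκ (Fl.obj c)]
    have h3 := (box.map (adjF.counit.app (Fl.obj c)).op).naturality (adjF.unit.app c)
    have h2 := E₂.dinat (adjF.unit.app c)
    have key : box.map (adjF.counit.app (Fl.obj c)).op ≫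
          box.map (Fl.map (adjF.unit.app c)).op = 𝟙 _ := by
      rw [← box.map_comp, ← op_comp, adjF.left_triangle_components c]
      simp
    simp only [Functor.id_obj, Functor.id_map, Functor.comp_obj, Functor.comp_map]
      at h2 h3 key ⊢
    rw [← Category.assoc, h3, Category.assoc, ← h2, ← Category.assoc,
      ← NatTrans.comp_app, key, NatTrans.id_app, Category.id_comp]
  exact ⟨⟨κ, l, inv1, inv2⟩⟩

theorem statement10_end_iso (box : Aᵒᵖ ⥤ C ⥤ D) (G : A ⥤ C) (Gr : C ⥤ A) (adjG : G ⊣ Gr)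
    (E₃ : BoxEnd box (𝟭 A) G) (E₄ : BoxEnd box Gr (𝟭 C)) :
    Nonempty (E₃.pt ≅ E₄.pt) := by
  have dinat1 : ∀ {c c' : C} (g : c ⟶ c'),
      (E₃.π (Gr.obj c) ≫ (box.obj (op (Gr.obj c))).map (adjG.counit.app c)) ≫
          (box.obj (op (Gr.obj c))).map ((𝟭 C).map g)
        = (E₃.π (Gr.obj c') ≫ (box.obj (op (Gr.obj c'))).map (adjG.counit.app c')) ≫
          (box.map (Gr.map g).op).app ((𝟭 C).obj c') := by
    intro c c' g
    have h1 : (adjG.counit.app c ≫ g : G.obj (Gr.obj c) ⟶ c')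
        = G.map (Gr.map g) ≫ adjG.counit.app c' := by
      simpa using (adjG.counit.naturality g).symm
    have h2 := E₃.dinat (Gr.map g)
    have h3 := (box.map (Gr.map g).op).naturality (adjG.counit.app c')
    simp only [Functor.id_obj, Functor.id_map, Functor.comp_obj, Functor.comp_map] at h2 h3 ⊢
    rw [Category.assoc, ← Functor.map_comp, h1, Functor.map_comp, ← Category.assoc, h2,
      Category.assoc, ← h3, ← Category.assoc, Category.assoc]
  obtain ⟨κ, hκ, -⟩ := E₄.universal E₃.pt
    (fun c => E₃.π (Gr.obj c) ≫ (box.obj (op (Gr.obj c))).map (adjG.counit.app c))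
    (fun {c c'} g => dinat1 g)
  have dinat2 : ∀ {a a' : A} (f : a ⟶ a'),
      (E₄.π (G.obj a) ≫ (box.map (adjG.unit.app a).op).app (G.obj a)) ≫
          (box.obj (op ((𝟭 A).obj a))).map (G.map f)
        = (E₄.π (G.obj a') ≫ (box.map (adjG.unit.app a').op).app (G.obj a')) ≫
          (box.map ((𝟭 A).map f).op).app (G.obj a') := by
    intro a a' f
    have h1 : (adjG.unit.app a ≫ Gr.map (G.map f) : a ⟶ Gr.obj (G.obj a'))
        = f ≫ adjG.unit.app a' := by simpa using adjG.unit.naturality f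
    have h2 := E₄.dinat (G.map f)
    have h3 := (box.map (adjG.unit.app a).op).naturality (G.map f)
    have key : box.map (Gr.map (G.map f)).op ≫ box.map (adjG.unit.app a).op
        = box.map (adjG.unit.app a').op ≫ box.map f.op := by
      rw [← box.map_comp, ← box.map_comp, ← op_comp, ← op_comp, h1]
    simp only [Functor.id_obj, Functor.id_map, Functor.comp_obj, Functor.comp_map] at h2 h3 ⊢
    rw [Category.assoc, ← h3, ← Category.assoc, h2, Category.assoc,
      ← NatTrans.comp_app, key, NatTrans.comp_app, ← Category.assoc, Category.assoc]
  obtain ⟨l, hl, -⟩ := E₃.universal E₄.pt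
    (fun a => E₄.π (G.obj a) ≫ (box.map (adjG.unit.app a).op).app (G.obj a))
    (fun {a a'} f => dinat2 f)
  obtain ⟨m₁, -, hu₁⟩ := E₃.universal E₃.pt E₃.π (fun {a a'} f => E₃.dinat f)
  obtain ⟨m₂, -, hu₂⟩ := E₄.universal E₄.pt E₄.π (fun {c c'} f => E₄.dinat f)
  have inv1 : κ ≫ l = 𝟙 E₃.pt := by
    refine (hu₁ (κ ≫ l) ?_).trans (hu₁ (𝟙 E₃.pt) (fun a => by simp)).symm
    intro a
    show (κ ≫ l) ≫ E₃.π a = E₃.π a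
    rw [Category.assoc, hl a, ← Category.assoc, hκ (G.obj a), Category.assoc]
    have h3 := (box.map (adjG.unit.app a).op).naturality (adjG.counit.app (G.obj a))
    have h2 := E₃.dinat (adjG.unit.app a)
    simp only [Functor.id_obj, Functor.id_map, Functor.comp_obj, Functor.comp_map]
      at h2 h3 ⊢
    rw [h3, ← Category.assoc, ← h2, Category.assoc, ← Functor.map_comp,
      adjG.left_triangle_components a, CategoryTheory.Functor.map_id, Category.comp_id]
  have inv2 : l ≫ κ = 𝟙 E₄.pt := by
    refine (hu₂ (l ≫ κ) ?_).trans (hu₂ (𝟙 E₄.pt) (fun c => by simp)).symm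
    intro c
    show (l ≫ κ) ≫ E₄.π c = E₄.π c
    rw [Category.assoc, hκ c, ← Category.assoc, hl (Gr.obj c), Category.assoc]
    have h3 := (box.map (adjG.unit.app (Gr.obj c)).op).naturality (adjG.counit.app c)
    have h2 := E₄.dinat (adjG.counit.app c)
    have key : box.map (Gr.map (adjG.counit.app c)).op ≫
          box.map (adjG.unit.app (Gr.obj c)).op = 𝟙 _ := by
      rw [← box.map_comp, ← op_comp, adjG.right_triangle_components c]
      simp
    simp only [Functor.id_obj, Functor.id_map, Functor.comp_obj, Functor.comp_map]
      at h2 h3 key ⊢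
    rw [← h3, ← Category.assoc, h2, Category.assoc, ← NatTrans.comp_app, key,
      NatTrans.id_app, Category.comp_id]
  exact ⟨⟨κ, l, inv1, inv2⟩⟩

end Statement10Aux


end EW

/-- Let `A`, `C` be finite `k`-linear categories and let `(D, box)` be
(a model of) the Deligne product `Aᵒᵖ ⊠ C`.  For a left exact linear functor `F : A ⥤ C`
with left adjoint `F^l`, any coend `∫^{a ∈ A} ā ⊠ F(a)` is isomorphic to any coend
`∫^{c ∈ C} (F^l(c))‾ ⊠ c`; dually, for a right exact linear functor `G : A ⥤ C` with
right adjoint `G^r`, any end `∫_{a ∈ A} ā ⊠ G(a)` is isomorphic to any end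
`∫_{c ∈ C} (G^r(c))‾ ⊠ c`. -/
theorem statement_10 (k : Type u) [Field k]
    {A : Type u₁} [Category.{v₁} A] [Preadditive A] [CategoryTheory.Linear k A]
    {C : Type u₂} [Category.{v₂} C] [Preadditive C] [CategoryTheory.Linear k C]
    {D : Type u₃} [Category.{v₃} D] [Preadditive D] [CategoryTheory.Linear k D]
    [EW.IsFiniteLinear k A] [EW.IsFiniteLinear k C]
    (box : Aᵒᵖ ⥤ C ⥤ D) [EW.IsDeligneProduct k box]
    (F : A ⥤ C) [F.Additive] [F.Linear k] [PreservesFiniteLimits F]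
    (Fl : C ⥤ A) (adjF : Fl ⊣ F)
    (G : A ⥤ C) [G.Additive] [G.Linear k] [PreservesFiniteColimits G]
    (Gr : C ⥤ A) (adjG : G ⊣ Gr)
    (E₁ : EW.BoxCoend box (𝟭 A) F) (E₂ : EW.BoxCoend box Fl (𝟭 C))
    (E₃ : EW.BoxEnd box (𝟭 A) G) (E₄ : EW.BoxEnd box Gr (𝟭 C)) :
    Nonempty (E₁.pt ≅ E₂.pt) ∧ Nonempty (E₃.pt ≅ E₄.pt) :=
  ⟨EW.statement10_coend_iso box F Fl adjF E₁ E₂, EW.statement10_end_iso box G Gr adjG E₃ E₄⟩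
end

section
/- For any finite k-linear category X, the Nakayama functor Π_X = ∫^{x} Hom_X(-, x)* ⊗ x is left adjoint to the left exact Nakayama functor Π̄_X = ∫_{x} Hom_X(x, -) ⊗ x. -/
open CategoryTheory CategoryTheory.Limits Opposite

universe w v u v₁ u₁ v₂ u₂ v₃ u₃ v₄ u₄

namespace EWProof
open EW

variable (k : Type u) [Field k]

section FinDim

lemma findim_fg (A : Type u) [Ring A] [Algebra k A] [FiniteDimensional k A]
    (M N : FGModuleCat.{u} A) : FiniteDimensional k (M ⟶ N) := by
  letI := ModuleCat.moduleOfAlgebraModule (k := k) M.obj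
  letI := ModuleCat.isScalarTower_of_algebra_moduleCat (k := k) M.obj
  letI := ModuleCat.moduleOfAlgebraModule (k := k) N.obj
  letI := ModuleCat.isScalarTower_of_algebra_moduleCat (k := k) N.obj
  haveI := M.property
  haveI := N.property
  haveI : Module.Finite k M.obj := Module.Finite.trans A M.obj
  haveI : Module.Finite k N.obj := Module.Finite.trans A N.obj
  let φ : (M ⟶ N) →ₗ[k] (M.obj →ₗ[k] N.obj) :=
    { toFun := fun f => (f.hom.hom : M.obj →ₗ[A] N.obj).restrictScalars k
      map_add' := fun f g => rfl
      map_smul' := fun c f => rfl }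
  have hinj : Function.Injective φ := by
    intro f g h
    ext x
    exact congrArg (fun ψ => ψ x) h
  exact FiniteDimensional.of_injective φ hinj

lemma findim_hom {X : Type u₁} [Category.{v₁} X] [Preadditive X] [CategoryTheory.Linear k X]
    [IsFiniteLinear k X] (a b : X) : FiniteDimensional k (a ⟶ b) := by
  obtain ⟨A, _, _, _, e, _, hl, he⟩ := IsFiniteLinear.out (k := k) (C := X)
  haveI := hl
  haveI := he
  haveI := findim_fg k A (e.obj a) (e.obj b)
  let φ : (a ⟶ b) →ₗ[k] (e.obj a ⟶ e.obj b) :=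
    { toFun := fun f => e.map f
      map_add' := fun f g => e.map_add
      map_smul' := fun c f => e.map_smul c f }
  exact FiniteDimensional.of_injective φ (fun f g h => e.map_injective h)

end FinDim

section Tr

variable {V : Type*} {W : Type*} [AddCommGroup V] [Module k V] [AddCommGroup W] [Module k W]

/-- Transpose of a linear map out of a dual, using reflexivity of `V`. -/
noncomputable def tr [FiniteDimensional k V] (θ : Module.Dual k V →ₗ[k] W) :
    Module.Dual k W →ₗ[k] V :=
  ((Module.evalEquiv k V).symm.toLinearMap).comp θ.dualMap

lemma tr_spec [FiniteDimensional k V] (θ : Module.Dual k V →ₗ[k] W)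
    (φ : Module.Dual k W) (ψ : Module.Dual k V) : ψ (tr k θ φ) = φ (θ ψ) := by
  simpa [tr] using Module.apply_evalEquiv_symm_apply (R := k) (M := V) ψ (θ.dualMap φ)

lemma dual_ext (v w : V) (h : ∀ ψ : Module.Dual k V, ψ v = ψ w) : v = w := by
  rw [← sub_eq_zero, ← Module.forall_dual_apply_eq_zero_iff k (v - w)]
  intro φ
  simp [h φ]

lemma tr_tr [FiniteDimensional k V] [FiniteDimensional k W]
    (θ : Module.Dual k V →ₗ[k] W) : tr k (tr k θ) = θ := by
  ext ψ
  refine dual_ext k _ _ fun φ => ?_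
  rw [tr_spec, tr_spec]

end Tr

section Adj

variable {X : Type u₁} [Category.{v₁} X] [Preadditive X] [CategoryTheory.Linear k X]
variable [inst : ∀ a b : X, FiniteDimensional k (a ⟶ b)]
variable (R : RexNakayamaData k (X := X)) (L : LexNakayamaData k (X := X))

/-- The dinatural family associated to a morphism out of the coend. -/
def toθ {a b : X} (κ : R.N.obj a ⟶ b) (x : X) :
    Module.Dual k (a ⟶ x) →ₗ[k] (x ⟶ b) :=
  (CategoryTheory.Linear.rightComp k x κ).comp (R.ι a x)

/-- The dinatural family associated to a morphism into the end. -/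
def toσ {a b : X} (η : a ⟶ L.N.obj b) (x : X) :
    Module.Dual k (x ⟶ b) →ₗ[k] (a ⟶ x) :=
  (CategoryTheory.Linear.leftComp k x η).comp (L.π b x)

lemma wedgeθ {a b : X} (κ : R.N.obj a ⟶ b) {x x' : X} (f : x ⟶ x')
    (ψ : Module.Dual k (x ⟶ b)) :
    tr k (toθ k R κ x) ψ ≫ f
      = tr k (toθ k R κ x') (ψ.comp (CategoryTheory.Linear.leftComp k b f)) := by
  refine dual_ext k _ _ fun χ => ?_
  calc χ (tr k (toθ k R κ x) ψ ≫ f)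
      = (χ.comp (CategoryTheory.Linear.rightComp k a f)) (tr k (toθ k R κ x) ψ) := rfl
    _ = ψ (toθ k R κ x (χ.comp (CategoryTheory.Linear.rightComp k a f))) := tr_spec k _ _ _
    _ = ψ (R.ι a x (χ.comp (CategoryTheory.Linear.rightComp k a f)) ≫ κ) := rfl
    _ = ψ ((f ≫ R.ι a x' χ) ≫ κ) := by rw [R.wedge f χ]
    _ = ψ (f ≫ (R.ι a x' χ ≫ κ)) := by rw [Category.assoc]
    _ = (ψ.comp (CategoryTheory.Linear.leftComp k b f)) (toθ k R κ x' χ) := rfl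
    _ = χ (tr k (toθ k R κ x') (ψ.comp (CategoryTheory.Linear.leftComp k b f))) :=
        (tr_spec k _ _ _).symm

lemma wedgeσ {a b : X} (η : a ⟶ L.N.obj b) {x x' : X} (f : x ⟶ x')
    (ψ : Module.Dual k (a ⟶ x')) :
    f ≫ tr k (toσ k L η x') ψ
      = tr k (toσ k L η x) (ψ.comp (CategoryTheory.Linear.rightComp k a f)) := by
  refine dual_ext k _ _ fun χ => ?_
  calc χ (f ≫ tr k (toσ k L η x') ψ)
      = (χ.comp (CategoryTheory.Linear.leftComp k b f)) (tr k (toσ k L η x') ψ) := rfl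
    _ = ψ (toσ k L η x' (χ.comp (CategoryTheory.Linear.leftComp k b f))) := tr_spec k _ _ _
    _ = ψ (η ≫ L.π b x' (χ.comp (CategoryTheory.Linear.leftComp k b f))) := rfl
    _ = ψ (η ≫ (L.π b x χ ≫ f)) := by rw [L.wedge f χ]
    _ = ψ ((η ≫ L.π b x χ) ≫ f) := by rw [Category.assoc]
    _ = (ψ.comp (CategoryTheory.Linear.rightComp k a f)) (toσ k L η x χ) := rfl
    _ = χ (tr k (toσ k L η x) (ψ.comp (CategoryTheory.Linear.rightComp k a f))) :=
        (tr_spec k _ _ _).symm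

/-- The universal property applied to the transposed family of a morphism out of the coend. -/
noncomputable def phiSpec {a b : X} (κ : R.N.obj a ⟶ b) :
    ∃! η : a ⟶ L.N.obj b, ∀ (x : X) (ψ : Module.Dual k (x ⟶ b)),
      tr k (toθ k R κ x) ψ = η ≫ L.π b x ψ :=
  L.universal b a (fun x => tr k (toθ k R κ x)) (fun {x x'} f ψ => wedgeθ k R κ f ψ)

/-- The universal property applied to the transposed family of a morphism into the end. -/
noncomputable def psiSpec {a b : X} (η : a ⟶ L.N.obj b) :
    ∃! κ : R.N.obj a ⟶ b, ∀ (x : X) (ψ : Module.Dual k (a ⟶ x)),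
      tr k (toσ k L η x) ψ = R.ι a x ψ ≫ κ :=
  R.universal a b (fun x => tr k (toσ k L η x)) (fun {x x'} f ψ => wedgeσ k L η f ψ)

/-- One direction of the adjunction hom-equivalence. -/
noncomputable def Phi {a b : X} (κ : R.N.obj a ⟶ b) : a ⟶ L.N.obj b :=
  (phiSpec k R L κ).choose

lemma Phi_spec {a b : X} (κ : R.N.obj a ⟶ b) (x : X) (ψ : Module.Dual k (x ⟶ b)) :
    tr k (toθ k R κ x) ψ = Phi k R L κ ≫ L.π b x ψ :=
  (phiSpec k R L κ).choose_spec.1 x ψ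

/-- The other direction of the adjunction hom-equivalence. -/
noncomputable def Psi {a b : X} (η : a ⟶ L.N.obj b) : R.N.obj a ⟶ b :=
  (psiSpec k R L η).choose

lemma Psi_spec {a b : X} (η : a ⟶ L.N.obj b) (x : X) (ψ : Module.Dual k (a ⟶ x)) :
    tr k (toσ k L η x) ψ = R.ι a x ψ ≫ Psi k R L η :=
  (psiSpec k R L η).choose_spec.1 x ψ

lemma toσ_Phi {a b : X} (κ : R.N.obj a ⟶ b) (x : X) :
    toσ k L (Phi k R L κ) x = tr k (toθ k R κ x) := by
  ext ψ
  exact (Phi_spec k R L κ x ψ).symm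

lemma toθ_Psi {a b : X} (η : a ⟶ L.N.obj b) (x : X) :
    toθ k R (Psi k R L η) x = tr k (toσ k L η x) := by
  ext ψ
  exact (Psi_spec k R L η x ψ).symm

lemma Psi_Phi {a b : X} (κ : R.N.obj a ⟶ b) : Psi k R L (Phi k R L κ) = κ := by
  refine ((psiSpec k R L (Phi k R L κ)).choose_spec.2 κ fun x ψ => ?_).symm
  rw [toσ_Phi k R L κ x, tr_tr]
  rfl

lemma Phi_Psi {a b : X} (η : a ⟶ L.N.obj b) : Phi k R L (Psi k R L η) = η := by
  refine ((phiSpec k R L (Psi k R L η)).choose_spec.2 η fun x ψ => ?_).symm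
  rw [toθ_Psi k R L η x, tr_tr]
  rfl

lemma Phi_natural_right {a b b' : X} (κ : R.N.obj a ⟶ b) (g : b ⟶ b') :
    Phi k R L (κ ≫ g) = Phi k R L κ ≫ L.N.map g := by
  refine ((phiSpec k R L (κ ≫ g)).choose_spec.2 _ fun x ψ => ?_).symm
  rw [Category.assoc, L.natural g x ψ, ← Phi_spec k R L κ x]
  refine dual_ext k _ _ fun χ => ?_
  rw [tr_spec, tr_spec]
  exact congrArg ψ (Category.assoc _ _ _).symm

lemma Psi_natural_left {a a' b : X} (h : a' ⟶ a) (η : a ⟶ L.N.obj b) :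
    Psi k R L (h ≫ η) = R.N.map h ≫ Psi k R L η := by
  refine ((psiSpec k R L (h ≫ η)).choose_spec.2 _ fun x ψ => ?_).symm
  rw [← Category.assoc, R.natural h x ψ, ← Psi_spec k R L η x]
  refine dual_ext k _ _ fun χ => ?_
  rw [tr_spec, tr_spec]
  exact congrArg ψ (Category.assoc _ _ _)

/-- The adjunction between the two Nakayama functors. -/
noncomputable def adj : R.N ⊣ L.N :=
  Adjunction.mkOfHomEquiv
    { homEquiv := fun a b =>
        ⟨Phi k R L, Psi k R L, Psi_Phi k R L, Phi_Psi k R L⟩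
      homEquiv_naturality_left_symm := fun f g => Psi_natural_left k R L f g
      homEquiv_naturality_right := fun f g => Phi_natural_right k R L f g }

end Adj

end EWProof

/-- For any finite `k`-linear category `X`, the Nakayama functor
`Π_X = ∫^{x} Hom_X(-, x)* ⊗ x` is left adjoint to the left exact Nakayama functor
`Π̄_X = ∫_{x} Hom_X(x, -) ⊗ x`.  The two Nakayama functors are specified through their
universal properties as pointwise (co)ends, via the data `R : RexNakayamaData` and
`L : LexNakayamaData`. -/
theorem statement_12 (k : Type u) [Field k]
    {X : Type u₁} [Category.{v₁} X] [Preadditive X] [CategoryTheory.Linear k X]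
    [EW.IsFiniteLinear k X]
    (R : EW.RexNakayamaData k (X := X)) (L : EW.LexNakayamaData k (X := X)) :
    Nonempty (R.N ⊣ L.N) := by
  haveI : ∀ a b : X, FiniteDimensional k (a ⟶ b) := EWProof.findim_hom k
  exact ⟨EWProof.adj k R L⟩
end
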